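/- There exist three ℝ-trees T₁, T₂, T₃ such that, for every σ ≥ 1, there exists a 6-biLipschitz embedding of (La(ℤ), TSCP + σρ) into the ℓ1-product T₁ ⊕₁ T₂ ⊕₁ T₃, and an 18-biLipschitz embedding of (La(ℤ), TSCP + σρ) into the ℓ∞-product T₁ ⊕_∞ T₂ ⊕_∞ T₃. -/
import Mathlib


open Metric Set
open scoped Classical ENNReal NNReal

noncomputable section

/-- The underlying set of the lamplighter space over `X`: a lamp configuration
(a finite set of lit lamps) together with the position of the lamplighter. -/
abbrev Lamp (X : Type*) := Finset X × X

namespace Lamplighter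

variable {X Y Z : Type*}

/-- The length of the path visiting the points of a list in order,
with respect to the distance function `d`. -/
def pathLength (d : X → X → ℝ) : List X → ℝ
  | [] => 0
  | [_] => 0
  | x :: y :: l => d x y + pathLength d (y :: l)

/-- The symmetric difference of the lamp configurations of `p` and `q`, as a set. -/
def sd (p q : Lamp X) : Set X :=
  ((p.1 : Set X) \ (q.1 : Set X)) ∪ ((q.1 : Set X) \ (p.1 : Set X))

/-- The traveling salesman semimetric on the lamplighter space:
the infimum of lengths of finite paths starting at `p.2`, ending at `q.2`, and
visiting every point of the symmetric difference of the configurations. -/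
def TSP (d : X → X → ℝ) (p q : Lamp X) : ℝ :=
  sInf { s : ℝ | ∃ l : List X, l.head? = some p.2 ∧ l.getLast? = some q.2 ∧
    (∀ a ∈ sd p q, a ∈ l) ∧ s = pathLength d l }

/-- The diameter (in `ℝ≥0∞`) of a set with respect to a distance function `d`. -/
def ediamD (d : X → X → ℝ) (A : Set X) : ℝ≥0∞ :=
  ⨆ x ∈ A, ⨆ y ∈ A, ENNReal.ofReal (d x y)

/-- The traveling salesman shortcut semimetric:
`TSCP((A,x),(B,y)) = diam({x,y} ∪ (A Δ B))`. -/
def TSCP (d : X → X → ℝ) (p q : Lamp X) : ℝ :=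
  (ediamD d ({p.2, q.2} ∪ sd p q)).toReal

/-- `ρ((A,x),(B,y))` is `0` if `A = B` and `1` otherwise. -/
def rho (p q : Lamp X) : ℝ := if p.1 = q.1 then 0 else 1

/-- The lamplighter metric `d_La = TSP + ρ`. -/
def dLa (d : X → X → ℝ) (p q : Lamp X) : ℝ := TSP d p q + rho p q

/-- `X` is `K`-TSP-efficient if `TSP ≤ K • TSCP` on `La(X)²`. -/
def TSPEfficient (d : X → X → ℝ) (K : ℝ) : Prop :=
  ∀ p q : Lamp X, TSP d p q ≤ K * TSCP d p q

/-- A weak `C`-biLipschitz embedding between spaces with distance functions `dY`, `dZ`: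
a family of maps `φ t : Y → Z` (for `t > 0`) such that each `φ t` is `σ t`-Lipschitz
and `dY x y ≥ C*t` implies `dZ (φ t x) (φ t y) ≥ t * σ t`. -/
def WeakBiLip (dY : Y → Y → ℝ) (dZ : Z → Z → ℝ) (C : ℝ) : Prop :=
  ∃ φ : ℝ → Y → Z, ∀ t : ℝ, 0 < t → ∃ σ : ℝ, 0 < σ ∧
    (∀ x y : Y, dZ (φ t x) (φ t y) ≤ σ * dY x y) ∧
    (∀ x y : Y, C * t ≤ dY x y → t * σ ≤ dZ (φ t x) (φ t y))

/-- `f` is a `C`-biLipschitz embedding (an injective map of biLipschitz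
distortion at most `C`, allowing an overall scaling factor `s`). -/
def BiLipWith (dY : Y → Y → ℝ) (dZ : Z → Z → ℝ) (C : ℝ) (f : Y → Z) : Prop :=
  Function.Injective f ∧ ∃ s : ℝ, 0 < s ∧
    ∀ x y : Y, s * dY x y ≤ dZ (f x) (f y) ∧ dZ (f x) (f y) ≤ C * s * dY x y

/-- Nagata dimension at most `n` with constant at most `γ`: for every scale `s > 0`
there is a covering by sets of diameter at most `γ s` such that every set of diameter
less than `s` meets at most `n + 1` members of the covering. -/
def NagataDimD (d : Y → Y → ℝ) (n : ℕ) (γ : ℝ) : Prop :=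
  ∀ s : ℝ, 0 < s → ∃ B : Set (Set Y),
    (∀ y : Y, ∃ b ∈ B, y ∈ b) ∧
    (∀ b ∈ B, ediamD d b ≤ ENNReal.ofReal (γ * s)) ∧
    (∀ A : Set Y, ediamD d A < ENNReal.ofReal s →
      {b | b ∈ B ∧ (b ∩ A).Nonempty}.encard ≤ ((n : ℕ∞) + 1))

/-- Markov type 2 with constant `M`, for the distance function `d`: for every stationary
reversible Markov chain on a finite state space (given by a stationary distribution `μ`
and a reversible stochastic transition matrix `P`), every map `f` into the space, and
every time `t`, `E[d(f(Z_t),f(Z_0))²] ≤ M² t E[d(f(Z_1),f(Z_0))²]`. -/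
def HasMarkovType2 (d : Y → Y → ℝ) (M : ℝ) : Prop :=
  ∀ (n : ℕ) (μ : Fin n → ℝ) (P : Matrix (Fin n) (Fin n) ℝ),
    (∀ i, 0 ≤ μ i) → (∑ i, μ i) = 1 →
    (∀ i j, 0 ≤ P i j) → (∀ i, (∑ j, P i j) = 1) →
    (∀ i j, μ i * P i j = μ j * P j i) →
    ∀ (f : Fin n → Y) (t : ℕ),
      (∑ i, ∑ j, μ i * (P ^ t) i j * d (f i) (f j) ^ 2) ≤
        M ^ 2 * t * ∑ i, ∑ j, μ i * P i j * d (f i) (f j) ^ 2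

/-- `D`-doubling: every ball of radius `r` can be covered by `D` balls of radius `r/2`. -/
def Doubling (d : Y → Y → ℝ) (D : ℕ) : Prop :=
  ∀ r : ℝ, 0 < r → ∀ x : Y, ∃ c : Fin D → Y,
    ∀ y : Y, d x y ≤ r → ∃ i, d (c i) y ≤ r / 2

/-- `A` is an arc from `x` to `y`: the image of an injective continuous map of `[0,1]`
sending the endpoints to `x` and `y`. -/
def IsArc {T : Type*} [MetricSpace T] (x y : T) (A : Set T) : Prop :=
  ∃ γ : ℝ → T, ContinuousOn γ (Icc 0 1) ∧ InjOn γ (Icc 0 1) ∧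
    γ 0 = x ∧ γ 1 = y ∧ γ '' (Icc 0 1) = A

/-- `A` is a geodesic segment from `x` to `y`: the image of an isometric embedding
of `[0, dist x y]` sending the endpoints to `x` and `y`. -/
def IsGeodesicSeg {T : Type*} [MetricSpace T] (x y : T) (A : Set T) : Prop :=
  ∃ γ : ℝ → T, γ 0 = x ∧ γ (dist x y) = y ∧
    (∀ s ∈ Icc (0 : ℝ) (dist x y), ∀ t ∈ Icc (0 : ℝ) (dist x y),
      dist (γ s) (γ t) = |s - t|) ∧
    γ '' (Icc 0 (dist x y)) = A

/-- `T` is an ℝ-tree: any two (distinct) points are joined by a unique arc,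
and this arc is a geodesic. -/
def IsRTree (T : Type*) [MetricSpace T] : Prop :=
  ∀ x y : T, x ≠ y →
    (∃ A : Set T, IsArc x y A) ∧
    (∀ A A' : Set T, IsArc x y A → IsArc x y A' → A = A') ∧
    (∀ A : Set T, IsArc x y A → IsGeodesicSeg x y A)

/-- The sup (ℓ∞-product) distance on a finite product of metric spaces. -/
def piSupDist {n : ℕ} {T : Fin n → Type*} (I : ∀ i, MetricSpace (T i)) :
    (∀ i, T i) → (∀ i, T i) → ℝ :=
  letI := I
  fun f g => dist f g

/-- The ℓ1-product distance on a finite product of metric spaces. -/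
def piL1Dist {n : ℕ} {T : Fin n → Type*} (I : ∀ i, MetricSpace (T i)) :
    (∀ i, T i) → (∀ i, T i) → ℝ :=
  letI := I
  fun f g => ∑ i, dist (f i) (g i)

/-- The ℓ1 distance on `ℝ^m`. -/
def l1Dist (m : ℕ) (x y : Fin m → ℝ) : ℝ := ∑ i, |x i - y i|

/-- The ℓp distance on `ℝ^m`. -/
def lpDist (m : ℕ) (p : ℝ) (x y : Fin m → ℝ) : ℝ :=
  (∑ i, |x i - y i| ^ p) ^ (1 / p)

/-- The (pseudo)distance of the ℝ-star over the index type `ι`: the wedge sum of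
copies of `[0,∞)` indexed by `ι`, glued at `0`. -/
def starDist {ι : Type*} (p q : ι × ℝ≥0) : ℝ :=
  if p.1 = q.1 then |(p.2 : ℝ) - (q.2 : ℝ)| else (p.2 : ℝ) + (q.2 : ℝ)

/-- The sup (ℓ∞-product) of finitely many distance functions. -/
def supD {n : ℕ} {T : Fin n → Type*} (d : ∀ i, T i → T i → ℝ) (f g : ∀ i, T i) : ℝ :=
  ((Finset.univ.sup fun i => (d i (f i) (g i)).toNNReal : ℝ≥0) : ℝ)

/-- The infimum of distortions of biLipschitz embeddings of `(Y, dY)` into `(Z, dZ)`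
(`∞` if there is no such embedding). -/
def cEmb (dY : Y → Y → ℝ) (dZ : Z → Z → ℝ) : ℝ≥0∞ :=
  sInf { D : ℝ≥0∞ | ∃ C : ℝ, 0 < C ∧ D = ENNReal.ofReal C ∧
    ∃ f : Y → Z, BiLipWith dY dZ C f }

/-- `c_1^{m,dom}(X,d)`: the infimum of all `D > 0` such that there exist injective
`1`-Lipschitz maps `φ i : X → ℝ` and weights `α i ≥ 0` summing to `1` with
`∑ i, α i * |φ i x - φ i y| ≥ d x y / D` for all `x y` (`∞` if there is none). -/
def c1dom (d : X → X → ℝ) (m : ℕ) : ℝ≥0∞ :=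
  sInf { D : ℝ≥0∞ | ∃ C : ℝ, 0 < C ∧ D = ENNReal.ofReal C ∧
    ∃ (φ : Fin m → X → ℝ) (α : Fin m → ℝ),
      (∀ i, Function.Injective (φ i)) ∧
      (∀ i, ∀ x y : X, |φ i x - φ i y| ≤ d x y) ∧
      (∀ i, 0 ≤ α i) ∧ (∑ i, α i) = 1 ∧
      ∀ x y : X, d x y / C ≤ ∑ i, α i * |φ i x - φ i y| }

/-- The Hamming distance on the Hamming cube `{0,1}^M`, as a real number. -/
def hamDist {M : ℕ} (x y : Fin M → Bool) : ℝ :=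
  ((Finset.univ.filter fun i => x i ≠ y i).card : ℝ)

/-- The star graph `St_{n,k}`: the one-point coalescence of `n` paths of length `k`,
realized inside `ℤ^n` as the multiples `α eᵢ` with `0 ≤ α ≤ k`. -/
def St (n k : ℕ) : Type :=
  {x : Fin n → ℤ // ∃ i : Fin n, (∀ j : Fin n, j ≠ i → x j = 0) ∧ 0 ≤ x i ∧ x i ≤ (k : ℤ)}

/-- The ℓ1 metric on the star graph `St_{n,k}`. -/
def stDist {n k : ℕ} (x y : St n k) : ℝ := ∑ j, |(x.1 j : ℝ) - (y.1 j : ℝ)|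

/-- The endpoint `k eᵢ` of the `i`-th branch of the star graph. -/
def St.endpoint {n k : ℕ} (i : Fin n) : St n k :=
  ⟨fun j => if j = i then (k : ℤ) else 0, i, fun j hj => if_neg hj, by simp, by simp⟩

/-- The cycle metric on `ℤ/nℤ`. -/
def cycDist {n : ℕ} (a b : ZMod n) : ℝ := ((min ((a - b).val) ((b - a).val) : ℕ) : ℝ)

/-- The rectangular grid `G_{k,n} = ([0,k] ∩ ℤ) × ([0,n] ∩ ℤ)`. -/
def Grid2 (k n : ℕ) : Type :=
  {p : ℤ × ℤ // 0 ≤ p.1 ∧ p.1 ≤ (k : ℤ) ∧ 0 ≤ p.2 ∧ p.2 ≤ (n : ℤ)}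

/-- The ℓ1 metric on the grid `G_{k,n}`. -/
def grid2Dist {k n : ℕ} (x y : Grid2 k n) : ℝ :=
  |(x.1.1 : ℝ) - (y.1.1 : ℝ)| + |(x.1.2 : ℝ) - (y.1.2 : ℝ)|

/-- The `m`-dimensional grid `G^m({n_i}) = ∏ i, ([0, n_i] ∩ ℤ)`. -/
def GridM (m : ℕ) (n : Fin m → ℕ) : Type :=
  {p : Fin m → ℤ // ∀ i, 0 ≤ p i ∧ p i ≤ (n i : ℤ)}

/-- The ℓ1 metric on the `m`-dimensional grid. -/
def gridMDist {m : ℕ} {n : Fin m → ℕ} (x y : GridM m n) : ℝ :=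
  ∑ i, |(x.1 i : ℝ) - (y.1 i : ℝ)|


/-- Points of the tree: a finite set of branching data strictly above the height. -/
def TPt : Type := {p : Finset ℝ × ℝ // ∀ a ∈ p.1, p.2 < a}

namespace TPt

def cfg (P : TPt) : Finset ℝ := P.1.1
def ht (P : TPt) : ℝ := P.1.2

lemma ht_lt {P : TPt} {a : ℝ} (h : a ∈ P.cfg) : P.ht < a := P.2 a h

def joinSet (P Q : TPt) : Finset ℝ := insert P.ht (insert Q.ht (symmDiff P.cfg Q.cfg))

lemma mem_joinSet {P Q : TPt} {z : ℝ} :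
    z ∈ joinSet P Q ↔ z = P.ht ∨ z = Q.ht ∨ z ∈ symmDiff P.cfg Q.cfg := by
  simp [joinSet]

lemma joinSet_nonempty (P Q : TPt) : (joinSet P Q).Nonempty :=
  ⟨P.ht, Finset.mem_insert_self _ _⟩

/-- The height of the meet (common ancestor level). -/
def c (P Q : TPt) : ℝ := (joinSet P Q).max' (joinSet_nonempty P Q)

def tdist (P Q : TPt) : ℝ := (c P Q - P.ht) + (c P Q - Q.ht)

lemma joinSet_comm (P Q : TPt) : joinSet P Q = joinSet Q P := by
  rw [joinSet, joinSet, Finset.insert_comm, symmDiff_comm]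

lemma c_comm (P Q : TPt) : c P Q = c Q P := by
  simp only [c]; congr 1; exact joinSet_comm P Q

lemma ht_le_c_left (P Q : TPt) : P.ht ≤ c P Q :=
  Finset.le_max' _ _ (mem_joinSet.2 (Or.inl rfl))

lemma ht_le_c_right (P Q : TPt) : Q.ht ≤ c P Q :=
  Finset.le_max' _ _ (mem_joinSet.2 (Or.inr (Or.inl rfl)))

lemma le_c_of_mem {P Q : TPt} {z : ℝ} (h : z ∈ joinSet P Q) : z ≤ c P Q :=
  Finset.le_max' _ _ h

lemma c_mem (P Q : TPt) : c P Q ∈ joinSet P Q := Finset.max'_mem _ _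

lemma c_le {P Q : TPt} {b : ℝ} (h : ∀ z ∈ joinSet P Q, z ≤ b) : c P Q ≤ b :=
  Finset.max'_le _ _ _ h

lemma c_eq_of {P Q : TPt} {b : ℝ} (hmem : b ∈ joinSet P Q)
    (hub : ∀ z ∈ joinSet P Q, z ≤ b) : c P Q = b :=
  le_antisymm (c_le hub) (le_c_of_mem hmem)

lemma c_self (P : TPt) : c P P = P.ht := by
  apply c_eq_of (mem_joinSet.2 (Or.inl rfl))
  intro z hz
  rcases mem_joinSet.1 hz with rfl | rfl | h
  · exact le_rfl
  · exact le_rfl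
  · rw [symmDiff_self] at h; simp at h

lemma c_triangle (P Q R : TPt) : c P R ≤ max (c P Q) (c Q R) := by
  apply c_le
  intro z hz
  rcases mem_joinSet.1 hz with rfl | rfl | hz
  · exact le_max_of_le_left (ht_le_c_left P Q)
  · exact le_max_of_le_right (ht_le_c_right Q R)
  · have h := symmDiff_triangle P.cfg Q.cfg R.cfg
    rcases Finset.mem_union.1 (h hz) with h' | h'
    · exact le_max_of_le_left (le_c_of_mem (mem_joinSet.2 (Or.inr (Or.inr h'))))
    · exact le_max_of_le_right (le_c_of_mem (mem_joinSet.2 (Or.inr (Or.inr h'))))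

lemma tdist_self (P : TPt) : tdist P P = 0 := by simp [tdist, c_self]

lemma tdist_comm (P Q : TPt) : tdist P Q = tdist Q P := by
  simp only [tdist, c_comm P Q]; ring

lemma tdist_triangle (P Q R : TPt) : tdist P R ≤ tdist P Q + tdist Q R := by
  have h := c_triangle P Q R
  have h1 := ht_le_c_left P Q
  have h2 := ht_le_c_right P Q
  have h3 := ht_le_c_left Q R
  have h4 := ht_le_c_right Q R
  have h5 := ht_le_c_left P R
  have h6 := ht_le_c_right P R
  rcases le_max_iff.1 h with h' | h' <;> simp only [tdist] <;> linarith

lemma tdist_nonneg (P Q : TPt) : 0 ≤ tdist P Q := by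
  have h1 := ht_le_c_left P Q
  have h2 := ht_le_c_right P Q
  simp only [tdist]; linarith

lemma eq_of_tdist_eq_zero {P Q : TPt} (h : tdist P Q = 0) : P = Q := by
  have h1 := ht_le_c_left P Q
  have h2 := ht_le_c_right P Q
  have hc1 : c P Q = P.ht := by simp only [tdist] at h; linarith
  have hc2 : c P Q = Q.ht := by simp only [tdist] at h; linarith
  have hcfg : P.cfg = Q.cfg := by
    by_contra hne
    have hnon : (symmDiff P.cfg Q.cfg).Nonempty := by
      rw [Finset.nonempty_iff_ne_empty]
      intro he
      exact hne (by simpa [symmDiff_eq_bot] using he)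
    obtain ⟨a, ha⟩ := hnon
    have hle : a ≤ c P Q := le_c_of_mem (mem_joinSet.2 (Or.inr (Or.inr ha)))
    have hmem : a ∈ P.cfg ∨ a ∈ Q.cfg := by
      rcases Finset.mem_symmDiff.1 ha with ⟨h', _⟩ | ⟨h', _⟩
      · exact Or.inl h'
      · exact Or.inr h'
    rcases hmem with h' | h'
    · have := ht_lt h'; linarith
    · have := ht_lt h'; linarith
  apply Subtype.ext
  have hht : P.ht = Q.ht := by rw [← hc1, ← hc2]
  exact Prod.ext hcfg hht

instance : MetricSpace TPt := by
  letI pm : PseudoMetricSpace TPt :=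
    { dist := tdist
      dist_self := tdist_self
      dist_comm := tdist_comm
      dist_triangle := tdist_triangle
      toUniformSpace := UniformSpace.ofDist tdist tdist_self tdist_comm tdist_triangle
      uniformity_dist := rfl
      toBornology := Bornology.ofDist tdist tdist_comm tdist_triangle
      cobounded_sets := rfl }
  exact { pm with eq_of_dist_eq_zero := fun h => eq_of_tdist_eq_zero h }

lemma dist_eq (P Q : TPt) : dist P Q = (c P Q - P.ht) + (c P Q - Q.ht) := rfl

lemma c_fourpoint (P Q R W : TPt) :
    c P Q + c R W ≤ max (c P R + c Q W) (c P W + c Q R) := by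
  have h1 : c P Q ≤ max (c P R) (c Q R) := by
    have := c_triangle P R Q; rw [c_comm R Q] at this; exact this
  have h2 : c P Q ≤ max (c P W) (c Q W) := by
    have := c_triangle P W Q; rw [c_comm W Q] at this; exact this
  have h3 : c R W ≤ max (c P R) (c P W) := by
    have := c_triangle R P W; rw [c_comm R P] at this; exact this
  have h4 : c R W ≤ max (c Q R) (c Q W) := by
    have := c_triangle R Q W; rw [c_comm R Q] at this; exact this
  have h5 : c P W ≤ max (c P Q) (c Q W) := c_triangle P Q W
  have h6 : c Q W ≤ max (c P Q) (c P W) := by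
    have := c_triangle Q P W; rw [c_comm Q P] at this; exact this
  rcases le_max_iff.1 h1 with h1' | h1' <;>
  rcases le_max_iff.1 h2 with h2' | h2' <;>
  rcases le_max_iff.1 h3 with h3' | h3' <;>
  rcases le_max_iff.1 h4 with h4' | h4' <;>
  rcases le_max_iff.1 h5 with h5' | h5' <;>
  rcases le_max_iff.1 h6 with h6' | h6' <;>
  first
    | exact le_max_of_le_left (by linarith)
    | exact le_max_of_le_right (by linarith)

lemma fourpoint (P Q R W : TPt) :
    dist P Q + dist R W ≤ max (dist P R + dist Q W) (dist P W + dist Q R) := by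
  have h := c_fourpoint P Q R W
  simp only [dist_eq]
  rcases le_max_iff.1 h with h' | h'
  · exact le_max_of_le_left (by linarith)
  · exact le_max_of_le_right (by linarith)

/-- The downward ray through configuration `S` at height `h`. -/
def ray (S : Finset ℝ) (h : ℝ) : TPt :=
  ⟨(S.filter (fun a => h < a), h), fun a ha => (Finset.mem_filter.1 ha).2⟩

@[simp] lemma ray_ht (S : Finset ℝ) (h : ℝ) : (ray S h).ht = h := rfl
@[simp] lemma ray_cfg (S : Finset ℝ) (h : ℝ) :
    (ray S h).cfg = S.filter (fun a => h < a) := rfl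

lemma ray_self (P : TPt) : ray P.cfg P.ht = P := by
  apply Subtype.ext
  apply Prod.ext
  · exact Finset.filter_true_of_mem (fun a ha => ht_lt ha)
  · rfl

lemma c_ray_ray (S : Finset ℝ) {h h' : ℝ} (hle : h ≤ h') :
    c (ray S h) (ray S h') = h' := by
  apply c_eq_of (mem_joinSet.2 (Or.inr (Or.inl rfl)))
  intro z hz
  rcases mem_joinSet.1 hz with rfl | rfl | hz
  · exact hle
  · exact le_rfl
  · rcases Finset.mem_symmDiff.1 hz with ⟨hz1, hz2⟩ | ⟨hz1, hz2⟩
    · simp only [ray_cfg, Finset.mem_filter] at hz1 hz2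
      by_contra hc
      exact hz2 ⟨hz1.1, not_le.1 hc⟩
    · simp only [ray_cfg, Finset.mem_filter] at hz1 hz2
      exact absurd ⟨hz1.1, by linarith [hz1.2]⟩ hz2

lemma c_ray_cross (P Q : TPt) {h k : ℝ} (hh : P.ht ≤ h) (hhc : h ≤ c P Q)
    (hk : Q.ht ≤ k) (hkc : k ≤ c P Q) :
    c (ray P.cfg h) (ray Q.cfg k) = c P Q := by
  apply c_eq_of
  · -- c P Q belongs to the joinSet of the two rays
    rcases eq_or_lt_of_le hhc with he | hlt
    · exact mem_joinSet.2 (Or.inl he.symm)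
    rcases eq_or_lt_of_le hkc with he | hlt'
    · exact mem_joinSet.2 (Or.inr (Or.inl he.symm))
    -- h < c and k < c ; then c is attained in the symmetric difference of P, Q
    rcases mem_joinSet.1 (c_mem P Q) with he | he | he
    · exact absurd hlt (by rw [he]; exact not_lt.2 hh)
    · exact absurd hlt' (by rw [he]; exact not_lt.2 hk)
    · apply mem_joinSet.2 (Or.inr (Or.inr ?_))
      rcases Finset.mem_symmDiff.1 he with ⟨h1, h2⟩ | ⟨h1, h2⟩
      · apply Finset.mem_symmDiff.2 (Or.inl ?_)
        constructor
        · simp only [ray_cfg, Finset.mem_filter]; exact ⟨h1, hlt⟩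
        · simp only [ray_cfg, Finset.mem_filter]; intro hc; exact h2 hc.1
      · apply Finset.mem_symmDiff.2 (Or.inr ?_)
        constructor
        · simp only [ray_cfg, Finset.mem_filter]; exact ⟨h1, hlt'⟩
        · simp only [ray_cfg, Finset.mem_filter]; intro hc; exact h2 hc.1
  · intro z hz
    rcases mem_joinSet.1 hz with rfl | rfl | hz
    · exact hhc
    · exact hkc
    · rcases Finset.mem_symmDiff.1 hz with ⟨h1, h2⟩ | ⟨h1, h2⟩
      · simp only [ray_cfg, Finset.mem_filter] at h1 h2
        by_cases hzq : z ∈ Q.cfg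
        · by_contra hc
          exact h2 ⟨hzq, by linarith⟩
        · exact le_c_of_mem (mem_joinSet.2 (Or.inr (Or.inr
            (Finset.mem_symmDiff.2 (Or.inl ⟨h1.1, hzq⟩)))))
      · simp only [ray_cfg, Finset.mem_filter] at h1 h2
        by_cases hzp : z ∈ P.cfg
        · by_contra hc
          exact h2 ⟨hzp, by linarith⟩
        · exact le_c_of_mem (mem_joinSet.2 (Or.inr (Or.inr
            (Finset.mem_symmDiff.2 (Or.inr ⟨h1.1, hzp⟩)))))

/-- The geodesic from `P` to `Q`. -/
def geo (P Q : TPt) (u : ℝ) : TPt :=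
  if u ≤ c P Q - P.ht then ray P.cfg (P.ht + u)
  else ray Q.cfg (2 * c P Q - P.ht - u)

lemma geo_zero (P Q : TPt) : geo P Q 0 = P := by
  rw [geo, if_pos (by linarith [ht_le_c_left P Q]), add_zero, ray_self]

lemma ray_c_eq (P Q : TPt) : ray P.cfg (c P Q) = ray Q.cfg (c P Q) := by
  apply Subtype.ext
  apply Prod.ext
  · show P.cfg.filter (fun a => c P Q < a) = Q.cfg.filter (fun a => c P Q < a)
    ext a
    simp only [Finset.mem_filter]
    constructor
    · rintro ⟨ha, hlt⟩
      refine ⟨?_, hlt⟩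
      by_contra haq
      have : a ∈ symmDiff P.cfg Q.cfg := Finset.mem_symmDiff.2 (Or.inl ⟨ha, haq⟩)
      have := le_c_of_mem (mem_joinSet.2 (Or.inr (Or.inr this)))
      linarith
    · rintro ⟨ha, hlt⟩
      refine ⟨?_, hlt⟩
      by_contra hap
      have : a ∈ symmDiff P.cfg Q.cfg := Finset.mem_symmDiff.2 (Or.inr ⟨ha, hap⟩)
      have := le_c_of_mem (mem_joinSet.2 (Or.inr (Or.inr this)))
      linarith
  · rfl

lemma geo_end (P Q : TPt) : geo P Q (tdist P Q) = Q := by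
  have h1 := ht_le_c_left P Q
  have h2 := ht_le_c_right P Q
  by_cases hc : tdist P Q ≤ c P Q - P.ht
  · have hq : c P Q = Q.ht := by simp only [tdist] at hc; linarith
    rw [geo, if_pos hc]
    have he : P.ht + tdist P Q = c P Q := by simp only [tdist]; linarith
    rw [he, ray_c_eq, hq, ray_self]
  · rw [geo, if_neg hc]
    have he : 2 * c P Q - P.ht - tdist P Q = Q.ht := by simp only [tdist]; ring
    rw [he, ray_self]

lemma geo_dist_key (P Q : TPt) {u v : ℝ} (hu : 0 ≤ u) (huv : u ≤ v)
    (hv : v ≤ tdist P Q) : dist (geo P Q u) (geo P Q v) = v - u := by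
  have h1 := ht_le_c_left P Q
  have h2 := ht_le_c_right P Q
  have htd : tdist P Q = 2 * c P Q - P.ht - Q.ht := by simp only [tdist]; ring
  by_cases hvc : v ≤ c P Q - P.ht
  · -- both on the first ray
    have huc : u ≤ c P Q - P.ht := le_trans huv hvc
    rw [geo, geo, if_pos huc, if_pos hvc, dist_eq,
      c_ray_ray P.cfg (by linarith : P.ht + u ≤ P.ht + v)]
    (try simp only [ray_ht]); ring
  · by_cases huc : u ≤ c P Q - P.ht
    · -- cross case
      rw [geo, geo, if_pos huc, if_neg hvc, dist_eq,
        c_ray_cross P Q (by linarith) (by linarith) (by linarith) (by linarith)]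
      (try simp only [ray_ht]); ring
    · -- both on the second ray
      rw [geo, geo, if_neg huc, if_neg hvc, dist_eq]
      rw [c_comm, c_ray_ray Q.cfg (by linarith : 2*c P Q - P.ht - v ≤ 2*c P Q - P.ht - u)]
      (try simp only [ray_ht]); ring

lemma exists_geo (P Q : TPt) : ∃ γ : ℝ → TPt, γ 0 = P ∧ γ (dist P Q) = Q ∧
    ∀ u ∈ Icc (0:ℝ) (dist P Q), ∀ v ∈ Icc (0:ℝ) (dist P Q),
      dist (γ u) (γ v) = |u - v| := by
  refine ⟨geo P Q, geo_zero P Q, geo_end P Q, ?_⟩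
  intro u hu v hv
  rcases le_total u v with h | h
  · rw [geo_dist_key P Q hu.1 h hv.2, abs_of_nonpos (by linarith), neg_sub]
  · rw [dist_comm, geo_dist_key P Q hv.1 h hu.2, abs_of_nonneg (by linarith)]

end TPt

section Abstract

variable {T : Type*} [MetricSpace T]

/-- The four-point condition. -/
def FourPt (T : Type*) [MetricSpace T] : Prop :=
  ∀ p q r w : T, dist p q + dist r w ≤ max (dist p r + dist q w) (dist p w + dist q r)

/-- Geodesics exist. -/
def GeoSp (T : Type*) [MetricSpace T] : Prop :=
  ∀ p q : T, ∃ γ : ℝ → T, γ 0 = p ∧ γ (dist p q) = q ∧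
    ∀ u ∈ Icc (0:ℝ) (dist p q), ∀ v ∈ Icc (0:ℝ) (dist p q),
      dist (γ u) (γ v) = |u - v|

lemma FourPt.between_unique (h4 : FourPt T) {P Q W W' : T}
    (hW : dist P W + dist W Q = dist P Q) (hW' : dist P W' + dist W' Q = dist P Q)
    (hd : dist P W = dist P W') : W = W' := by
  have h := h4 W W' P Q
  have c1 : dist W P = dist P W := dist_comm _ _
  have c2 : dist W' P = dist P W' := dist_comm _ _
  have : dist W W' ≤ 0 := by
    rcases le_max_iff.1 h with h' | h' <;> linarith
  exact dist_le_zero.1 this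

lemma FourPt.sep (h4 : FourPt T) {P Q W W' : T}
    (hlt : dist P W - dist Q W < dist P W' - dist Q W') :
    dist P W' + dist Q W - dist P Q ≤ dist W W' := by
  have h := h4 P W' Q W
  have c1 : dist W' W = dist W W' := dist_comm _ _
  have c2 : dist W' Q = dist Q W' := dist_comm _ _
  rcases le_max_iff.1 h with h' | h' <;> linarith

/-- Any point on a geodesic from `P` to `Q` belongs to the image of any
continuous path from `P` to `Q`. -/
lemma geodesic_mem_path (h4 : FourPt T) {P Q : T} {γ : ℝ → T}
    (hγ0 : γ 0 = P) (hγd : γ (dist P Q) = Q)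
    (hγi : ∀ u ∈ Icc (0:ℝ) (dist P Q), ∀ v ∈ Icc (0:ℝ) (dist P Q),
      dist (γ u) (γ v) = |u - v|)
    {δ : ℝ → T} (hδc : ContinuousOn δ (Icc 0 1)) (hδ0 : δ 0 = P) (hδ1 : δ 1 = Q)
    {u₀ : ℝ} (hu₀ : u₀ ∈ Icc 0 (dist P Q)) : γ u₀ ∈ δ '' Icc 0 1 := by
  have hd0 : (0:ℝ) ≤ dist P Q := dist_nonneg
  have hγP : ∀ u ∈ Icc (0:ℝ) (dist P Q), dist P (γ u) = u := by
    intro u hu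
    have := hγi 0 ⟨le_rfl, hd0⟩ u hu
    rw [hγ0] at this
    rw [this, abs_of_nonpos (by linarith [hu.1]), neg_sub, sub_zero]
  have hγQ : ∀ u ∈ Icc (0:ℝ) (dist P Q), dist Q (γ u) = dist P Q - u := by
    intro u hu
    have := hγi (dist P Q) ⟨hd0, le_rfl⟩ u hu
    rw [hγd] at this
    rw [this, abs_of_nonneg (by linarith [hu.2])]
  rcases eq_or_lt_of_le hu₀.1 with h0 | h0
  · exact ⟨0, ⟨le_rfl, zero_le_one⟩, by rw [hδ0, ← hγ0, h0]⟩
  rcases eq_or_lt_of_le hu₀.2 with hd' | hd'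
  · refine ⟨1, ⟨zero_le_one, le_rfl⟩, ?_⟩
    rw [hd']
    exact hδ1.trans hγd.symm
  by_contra hmem
  -- the comparison function g v = dist P (δ v) - dist Q (δ v)
  set g : ℝ → ℝ := fun v => dist P (δ v) - dist Q (δ v) with hg
  have hgc : ContinuousOn g (Icc 0 1) := by
    apply ContinuousOn.sub
    · exact Continuous.comp_continuousOn (continuous_const.dist continuous_id) hδc
    · exact Continuous.comp_continuousOn (continuous_const.dist continuous_id) hδc
  set t₀ : ℝ := 2 * u₀ - dist P Q with ht₀
  set S : Set ℝ := {v | v ∈ Icc (0:ℝ) 1 ∧ g v < t₀} with hS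
  have h0S : 0 ∈ S := by
    refine ⟨⟨le_rfl, zero_le_one⟩, ?_⟩
    simp only [hg, hδ0, dist_self, hS, ht₀]
    have : dist Q P = dist P Q := dist_comm _ _
    simp only [this]
    linarith
  have hSne : S.Nonempty := ⟨0, h0S⟩
  have hSbdd : BddAbove S := ⟨1, fun v hv => hv.1.2⟩
  set v₁ := sSup S with hv₁
  have hv₁0 : 0 ≤ v₁ := le_csSup hSbdd h0S
  have hv₁1 : v₁ ≤ 1 := csSup_le hSne fun v hv => hv.1.2
  have hv₁I : v₁ ∈ Icc (0:ℝ) 1 := ⟨hv₁0, hv₁1⟩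
  have hSsub : S ⊆ Icc (0:ℝ) 1 := fun v hv => hv.1
  have hneS : (nhdsWithin v₁ S).NeBot :=
    mem_closure_iff_nhdsWithin_neBot.1 (csSup_mem_closure hSne hSbdd)
  have htendS : Filter.Tendsto g (nhdsWithin v₁ S) (nhds (g v₁)) :=
    ((hgc v₁ hv₁I).mono hSsub)
  have hle : g v₁ ≤ t₀ :=
    le_of_tendsto htendS
      (Filter.eventually_of_mem self_mem_nhdsWithin fun v hv => le_of_lt hv.2)
  have hge : t₀ ≤ g v₁ := by
    rcases eq_or_lt_of_le hv₁1 with h1 | h1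
    · rw [← h1] at hδ1
      rw [hg]
      simp only [hδ1]
      have e1 : dist P Q ≤ dist P Q := le_rfl
      have : dist Q Q = 0 := dist_self Q
      simp only [this]
      rw [ht₀]
      linarith
    · have hclos2 : v₁ ∈ closure (Ioo v₁ 1) := by
        rw [closure_Ioo (ne_of_lt h1)]
        exact ⟨le_rfl, le_of_lt h1⟩
      have hne2 : (nhdsWithin v₁ (Ioo v₁ 1)).NeBot :=
        mem_closure_iff_nhdsWithin_neBot.1 hclos2
      have hsub2 : Ioo v₁ 1 ⊆ Icc (0:ℝ) 1 := fun v hv =>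
        ⟨le_trans hv₁0 (le_of_lt hv.1), le_of_lt hv.2⟩
      have htend2 : Filter.Tendsto g (nhdsWithin v₁ (Ioo v₁ 1)) (nhds (g v₁)) :=
        ((hgc v₁ hv₁I).mono hsub2)
      apply ge_of_tendsto htend2
      apply Filter.eventually_of_mem self_mem_nhdsWithin
      intro v hv
      by_contra hcon
      push_neg at hcon
      have hvS : v ∈ S := ⟨hsub2 hv, hcon⟩
      exact absurd (le_csSup hSbdd hvS) (not_le.2 hv.1)
  have hgv₁ : g v₁ = t₀ := le_antisymm hle hge
  set W := δ v₁ with hW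
  have hWne : W ≠ γ u₀ := fun h => hmem (h ▸ ⟨v₁, hv₁I, rfl⟩)
  -- the excess of W
  have htri : dist P Q ≤ dist P W + dist Q W := by
    have := dist_triangle P W Q
    have c : dist W Q = dist Q W := dist_comm _ _
    linarith
  have heW : 0 < dist P W + dist Q W - dist P Q := by
    rcases lt_or_eq_of_le htri with h' | h'
    · linarith
    · exfalso
      apply hWne
      have hPW : dist P W = u₀ := by
        have hgW : dist P W - dist Q W = t₀ := hgv₁
        rw [ht₀] at hgW
        linarith
      have hQW : dist W Q = dist P Q - u₀ := by
        have hgW : dist P W - dist Q W = t₀ := hgv₁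
        rw [ht₀] at hgW
        have c : dist W Q = dist Q W := dist_comm _ _
        linarith
      apply h4.between_unique (P := P) (Q := Q)
        (by linarith : dist P W + dist W Q = dist P Q)
        ?_ ?_
      · have e1 := hγP u₀ hu₀
        have e2 := hγQ u₀ hu₀
        have c : dist (γ u₀) Q = dist Q (γ u₀) := dist_comm _ _
        linarith
      · rw [hPW, hγP u₀ hu₀]
  -- approach v₁ from within S and contradict
  have htd : Filter.Tendsto (fun v => dist (δ v) W) (nhdsWithin v₁ S) (nhds 0) := by
    have hcd : ContinuousOn (fun v => dist (δ v) W) (Icc 0 1) :=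
      Continuous.comp_continuousOn (continuous_id.dist continuous_const) hδc
    have htd0 : Filter.Tendsto (fun v => dist (δ v) W) (nhdsWithin v₁ S)
        (nhds (dist (δ v₁) W)) := (hcd v₁ hv₁I).mono hSsub
    have e : dist (δ v₁) W = 0 := by rw [hW, dist_self]
    rw [e] at htd0
    exact htd0
  have hev : ∀ᶠ v in nhdsWithin v₁ S,
      (dist P W + dist Q W - dist P Q)/2 ≤ dist (δ v) W := by
    apply Filter.eventually_of_mem self_mem_nhdsWithin
    intro v hv
    have hlt : dist P (δ v) - dist Q (δ v) < dist P W - dist Q W := by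
      have h1 : dist P (δ v) - dist Q (δ v) < t₀ := hv.2
      have h2 : dist P W - dist Q W = t₀ := hgv₁
      linarith
    have hsep := h4.sep hlt
    have htri2 : dist P Q ≤ dist P (δ v) + dist Q (δ v) := by
      have := dist_triangle P (δ v) Q
      have c : dist (δ v) Q = dist Q (δ v) := dist_comm _ _
      linarith
    linarith
  have : (dist P W + dist Q W - dist P Q)/2 ≤ 0 := ge_of_tendsto htd hev
  linarith


lemma geodesic_continuousOn {P Q : T} {γ : ℝ → T}
    (hγi : ∀ u ∈ Icc (0:ℝ) (dist P Q), ∀ v ∈ Icc (0:ℝ) (dist P Q),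
      dist (γ u) (γ v) = |u - v|) : ContinuousOn γ (Icc 0 (dist P Q)) := by
  apply LipschitzOnWith.continuousOn (K := 1)
  apply LipschitzOnWith.of_dist_le_mul
  intro u hu v hv
  rw [hγi u hu v hv, Real.dist_eq, NNReal.coe_one, one_mul]

lemma mid_on (h4 : FourPt T) {P Q : T} {γ : ℝ → T}
    (hγ0 : γ 0 = P) (hγd : γ (dist P Q) = Q)
    (hγi : ∀ u ∈ Icc (0:ℝ) (dist P Q), ∀ v ∈ Icc (0:ℝ) (dist P Q),
      dist (γ u) (γ v) = |u - v|)
    {ua ub : ℝ} (hua : ua ∈ Icc 0 (dist P Q)) (hub : ub ∈ Icc 0 (dist P Q))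
    (hlt : ua < ub) {M : T} (hM1 : dist (γ ua) M = (ub - ua)/2)
    (hM2 : dist M (γ ub) = (ub - ua)/2) : M = γ ((ua + ub)/2) := by
  have hd0 : (0:ℝ) ≤ dist P Q := dist_nonneg
  have hγP : ∀ u ∈ Icc (0:ℝ) (dist P Q), dist P (γ u) = u := by
    intro u hu
    have := hγi 0 ⟨le_rfl, hd0⟩ u hu
    rw [hγ0] at this
    rw [this, abs_of_nonpos (by linarith [hu.1]), neg_sub, sub_zero]
  have hγQ : ∀ u ∈ Icc (0:ℝ) (dist P Q), dist Q (γ u) = dist P Q - u := by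
    intro u hu
    have := hγi (dist P Q) ⟨hd0, le_rfl⟩ u hu
    rw [hγd] at this
    rw [this, abs_of_nonneg (by linarith [hu.2])]
  have hmid : (ua + ub)/2 ∈ Icc (0:ℝ) (dist P Q) :=
    ⟨by linarith [hua.1, hub.1], by linarith [hua.2, hub.2]⟩
  have hPM : dist P M ≤ (ua + ub)/2 := by
    have := dist_triangle P (γ ua) M
    have e := hγP ua hua
    linarith
  have hMQ : dist M Q ≤ dist P Q - (ua + ub)/2 := by
    have := dist_triangle M (γ ub) Q
    have e := hγQ ub hub
    have c : dist (γ ub) Q = dist Q (γ ub) := dist_comm _ _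
    linarith
  have htr : dist P Q ≤ dist P M + dist M Q := dist_triangle _ _ _
  have hPM' : dist P M = (ua + ub)/2 := le_antisymm hPM (by linarith)
  have hMQ' : dist M Q = dist P Q - (ua + ub)/2 := le_antisymm hMQ (by
    have := dist_triangle P M Q
    linarith)
  apply h4.between_unique (P := P) (Q := Q) (by linarith) ?_ ?_
  · have e1 := hγP ((ua + ub)/2) hmid
    have e2 := hγQ ((ua + ub)/2) hmid
    have c : dist (γ ((ua + ub)/2)) Q = dist Q (γ ((ua + ub)/2)) := dist_comm _ _
    linarith
  · rw [hPM', hγP ((ua + ub)/2) hmid]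

lemma arc_eq_geodesic (h4 : FourPt T) (hgeo : GeoSp T) {P Q : T} {γ : ℝ → T}
    (hγ0 : γ 0 = P) (hγd : γ (dist P Q) = Q)
    (hγi : ∀ u ∈ Icc (0:ℝ) (dist P Q), ∀ v ∈ Icc (0:ℝ) (dist P Q),
      dist (γ u) (γ v) = |u - v|)
    {A : Set T} (hA : IsArc P Q A) : A = γ '' Icc 0 (dist P Q) := by
  obtain ⟨δ, hδc, hδi, hδ0, hδ1, hδim⟩ := hA
  have hd0 : (0:ℝ) ≤ dist P Q := dist_nonneg
  have hγinj : ∀ u ∈ Icc (0:ℝ) (dist P Q), ∀ v ∈ Icc (0:ℝ) (dist P Q),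
      γ u = γ v → u = v := by
    intro u hu v hv he
    have := hγi u hu v hv
    rw [he, dist_self] at this
    have := abs_eq_zero.1 this.symm
    linarith
  apply Set.Subset.antisymm
  · -- A ⊆ G
    rintro z hz
    rw [← hδim] at hz
    obtain ⟨v₂, hv₂, rfl⟩ := hz
    by_contra hzG
    have hγc : ContinuousOn γ (Icc 0 (dist P Q)) := geodesic_continuousOn hγi
    have hGcl : IsClosed (γ '' Icc 0 (dist P Q)) :=
      ((isCompact_Icc).image_of_continuousOn hγc).isClosed
    set K : Set ℝ := Icc (0:ℝ) 1 ∩ δ ⁻¹' (γ '' Icc 0 (dist P Q)) with hK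
    have hKcl : IsClosed K :=
      hδc.preimage_isClosed_of_isClosed isClosed_Icc hGcl
    have h0K : (0:ℝ) ∈ K :=
      ⟨⟨le_rfl, zero_le_one⟩, ⟨0, ⟨le_rfl, hd0⟩, hγ0.trans hδ0.symm⟩⟩
    have h1K : (1:ℝ) ∈ K :=
      ⟨⟨zero_le_one, le_rfl⟩, ⟨dist P Q, ⟨hd0, le_rfl⟩, hγd.trans hδ1.symm⟩⟩
    have hv₂K : v₂ ∉ K := fun h => hzG h.2
    have hKane : (K ∩ Iic v₂).Nonempty := ⟨0, h0K, hv₂.1⟩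
    have hKabdd : BddAbove (K ∩ Iic v₂) := ⟨v₂, fun w hw => hw.2⟩
    set a := sSup (K ∩ Iic v₂) with ha
    have haKa : a ∈ K ∩ Iic v₂ :=
      (hKcl.inter isClosed_Iic).csSup_mem hKane hKabdd
    have hKbne : (K ∩ Ici v₂).Nonempty := ⟨1, h1K, hv₂.2⟩
    have hKbbdd : BddBelow (K ∩ Ici v₂) := ⟨v₂, fun w hw => hw.2⟩
    set b := sInf (K ∩ Ici v₂) with hb
    have hbKb : b ∈ K ∩ Ici v₂ :=
      (hKcl.inter isClosed_Ici).csInf_mem hKbne hKbbdd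
    have hav : a < v₂ := lt_of_le_of_ne haKa.2 fun h => hv₂K (h ▸ haKa.1)
    have hvb : v₂ < b := lt_of_le_of_ne hbKb.2 fun h => hv₂K (h ▸ hbKb.1)
    have hmidK : ∀ w, a < w → w < b → w ∉ K := by
      intro w hw1 hw2 hwK
      rcases le_total w v₂ with h | h
      · exact absurd (le_csSup hKabdd ⟨hwK, h⟩) (not_le.2 hw1)
      · exact absurd (csInf_le hKbbdd ⟨hwK, h⟩) (not_le.2 hw2)
    have haI : a ∈ Icc (0:ℝ) 1 := haKa.1.1
    have hbI : b ∈ Icc (0:ℝ) 1 := hbKb.1.1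
    have hab : a < b := hav.trans hvb
    have hne2 : δ a ≠ δ b := fun h => absurd (hδi haI hbI h) (ne_of_lt hab)
    obtain ⟨γ', hγ'0, hγ'd, hγ'i⟩ := hgeo (δ a) (δ b)
    have hd'0 : 0 < dist (δ a) (δ b) := dist_pos.2 hne2
    have hmaps : ∀ v ∈ Icc (0:ℝ) 1, a + v * (b - a) ∈ Icc a b := by
      intro v hv
      constructor
      · nlinarith [hv.1, hv.2]
      · nlinarith [hv.1, hv.2]
    have habsub : Icc a b ⊆ Icc (0:ℝ) 1 := fun w hw =>
      ⟨le_trans haI.1 hw.1, le_trans hw.2 hbI.2⟩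
    have hδℓc : ContinuousOn (fun v => δ (a + v * (b - a))) (Icc 0 1) := by
      apply ContinuousOn.comp hδc
        ((continuous_const.add (continuous_id.mul continuous_const)).continuousOn)
      intro v hv
      exact habsub (hmaps v hv)
    have hδℓ0 : (fun v => δ (a + v * (b - a))) 0 = δ a := by
      simp
    have hδℓ1 : (fun v => δ (a + v * (b - a))) 1 = δ b := by
      show δ (a + 1 * (b - a)) = δ b
      exact congrArg δ (by ring)
    have hmidIcc : dist (δ a) (δ b) / 2 ∈ Icc (0:ℝ) (dist (δ a) (δ b)) :=
      ⟨by linarith, by linarith⟩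
    have hM := geodesic_mem_path h4 hγ'0 hγ'd hγ'i hδℓc hδℓ0 hδℓ1 hmidIcc
    obtain ⟨v, hvI, hveq0⟩ := hM
    have hveq : δ (a + v * (b - a)) = γ' (dist (δ a) (δ b) / 2) := hveq0
    have hwab : a + v * (b - a) ∈ Icc a b := hmaps v hvI
    obtain ⟨ua, huaI, huae⟩ : ∃ u ∈ Icc (0:ℝ) (dist P Q), γ u = δ a := by
      obtain ⟨u, hu, he⟩ := haKa.1.2
      exact ⟨u, hu, he⟩
    obtain ⟨ub, hubI, hube⟩ : ∃ u ∈ Icc (0:ℝ) (dist P Q), γ u = δ b := by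
      obtain ⟨u, hu, he⟩ := hbKb.1.2
      exact ⟨u, hu, he⟩
    have huanb : ua ≠ ub := fun h => hne2 (by rw [← huae, ← hube, h])
    have hM1 : dist (δ a) (γ' (dist (δ a) (δ b) / 2)) = dist (δ a) (δ b) / 2 := by
      have := hγ'i 0 ⟨le_rfl, le_of_lt hd'0⟩ _ hmidIcc
      rw [hγ'0] at this
      rw [this, abs_of_nonpos (by linarith), neg_sub, sub_zero]
    have hM2 : dist (γ' (dist (δ a) (δ b) / 2)) (δ b) = dist (δ a) (δ b) / 2 := by
      have := hγ'i _ hmidIcc (dist (δ a) (δ b)) ⟨le_of_lt hd'0, le_rfl⟩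
      rw [hγ'd] at this
      rw [this, abs_of_nonpos (by linarith), neg_sub]
      ring
    have hMonγ : ∃ m, ((ua < m ∧ m < ub) ∨ (ub < m ∧ m < ua)) ∧ m ∈ Icc (0:ℝ) (dist P Q)
        ∧ γ' (dist (δ a) (δ b) / 2) = γ m := by
      rcases lt_or_gt_of_ne huanb with hlt | hlt
      · have hd'eq : dist (δ a) (δ b) = ub - ua := by
          rw [← huae, ← hube, hγi ua huaI ub hubI, abs_of_nonpos (by linarith), neg_sub]
        refine ⟨(ua + ub)/2, Or.inl ⟨by linarith, by linarith⟩,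
          ⟨by linarith [huaI.1, hubI.1], by linarith [huaI.2, hubI.2]⟩, ?_⟩
        apply mid_on h4 hγ0 hγd hγi huaI hubI hlt
        · rw [huae, hM1, hd'eq]
        · rw [hube, hM2, hd'eq]
      · have hd'eq : dist (δ a) (δ b) = ua - ub := by
          rw [← huae, ← hube, hγi ua huaI ub hubI, abs_of_nonneg (by linarith)]
        refine ⟨(ub + ua)/2, Or.inr ⟨by linarith, by linarith⟩,
          ⟨by linarith [huaI.1, hubI.1], by linarith [huaI.2, hubI.2]⟩, ?_⟩
        apply mid_on h4 hγ0 hγd hγi hubI huaI hlt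
        · rw [hube, dist_comm, hM2, hd'eq]
        · rw [huae, dist_comm, hM1, hd'eq]
    obtain ⟨m, hmB, hmI, hMeq⟩ := hMonγ
    have hwK : a + v * (b - a) ∈ K := by
      refine ⟨habsub hwab, ?_⟩
      rw [mem_preimage, hveq, hMeq]
      exact mem_image_of_mem _ hmI
    have hwend : a + v * (b - a) = a ∨ a + v * (b - a) = b := by
      rcases eq_or_lt_of_le hwab.1 with h | h
      · exact Or.inl h.symm
      rcases eq_or_lt_of_le hwab.2 with h' | h'
      · exact Or.inr h'
      · exact absurd (hmidK _ h h') (not_not.2 hwK)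
    have hmne : m ≠ ua ∧ m ≠ ub := by
      rcases hmB with ⟨h1, h2⟩ | ⟨h1, h2⟩
      · exact ⟨ne_of_gt h1, ne_of_lt h2⟩
      · exact ⟨ne_of_lt h2, ne_of_gt h1⟩
    rcases hwend with h | h
    · rw [h] at hveq
      have he : γ m = γ ua := by rw [← hMeq, ← hveq, huae]
      exact hmne.1 (hγinj m hmI ua huaI he)
    · rw [h] at hveq
      have he : γ m = γ ub := by rw [← hMeq, ← hveq, hube]
      exact hmne.2 (hγinj m hmI ub hubI he)
  · rintro z ⟨u, hu, rfl⟩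
    rw [← hδim]
    exact geodesic_mem_path h4 hγ0 hγd hγi hδc hδ0 hδ1 hu


lemma image_mul_Icc01 {d : ℝ} (hd : 0 < d) :
    (fun v : ℝ => v * d) '' Icc 0 1 = Icc 0 d := by
  ext z
  constructor
  · rintro ⟨v, hv, rfl⟩
    refine ⟨mul_nonneg hv.1 (le_of_lt hd), ?_⟩
    show v * d ≤ d
    nlinarith [hv.2]
  · rintro ⟨h1, h2⟩
    refine ⟨z / d, ⟨div_nonneg h1 (le_of_lt hd), (div_le_one hd).2 h2⟩, ?_⟩
    field_simp

theorem isRTree_of_fourPt_geo (h4 : FourPt T) (hgeo : GeoSp T) : IsRTree T := by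
  intro x y hxy
  obtain ⟨γ, hγ0, hγd, hγi⟩ := hgeo x y
  have hd0 : 0 < dist x y := dist_pos.2 hxy
  have hγc : ContinuousOn γ (Icc 0 (dist x y)) := geodesic_continuousOn hγi
  have hγinj : ∀ u ∈ Icc (0:ℝ) (dist x y), ∀ v ∈ Icc (0:ℝ) (dist x y),
      γ u = γ v → u = v := by
    intro u hu v hv he
    have := hγi u hu v hv
    rw [he, dist_self] at this
    have := abs_eq_zero.1 this.symm
    linarith
  have hmaps : ∀ v ∈ Icc (0:ℝ) 1, v * dist x y ∈ Icc 0 (dist x y) := by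
    intro v hv
    exact ⟨mul_nonneg hv.1 (le_of_lt hd0), by nlinarith [hv.2]⟩
  have harc : IsArc x y (γ '' Icc 0 (dist x y)) := by
    refine ⟨fun v => γ (v * dist x y), ?_, ?_, ?_, ?_, ?_⟩
    · exact ContinuousOn.comp hγc
        ((continuous_id.mul continuous_const).continuousOn) hmaps
    · intro u hu v hv he
      have := hγinj _ (hmaps u hu) _ (hmaps v hv) he
      exact mul_right_cancel₀ (ne_of_gt hd0) this
    · show γ (0 * dist x y) = x
      rw [zero_mul]; exact hγ0
    · show γ (1 * dist x y) = y
      rw [one_mul]; exact hγd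
    · rw [show (fun v => γ (v * dist x y)) = γ ∘ (fun v : ℝ => v * dist x y) from rfl,
        image_comp, image_mul_Icc01 hd0]
  refine ⟨⟨_, harc⟩, ?_, ?_⟩
  · intro A A' hA hA'
    rw [arc_eq_geodesic h4 hgeo hγ0 hγd hγi hA, arc_eq_geodesic h4 hgeo hγ0 hγd hγi hA']
  · intro A hA
    rw [arc_eq_geodesic h4 hgeo hγ0 hγd hγi hA]
    exact ⟨γ, hγ0, hγd, hγi, rfl⟩

end Abstract

/-- The tree `TPt` is an ℝ-tree. -/
theorem TPt.isRTree : IsRTree TPt :=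
  isRTree_of_fourPt_geo (fun p q r w => TPt.fourpoint p q r w) TPt.exists_geo



section Embed

/-- The finite set `{x, y} ∪ (A Δ B)` controlling `TSCP`. -/
def FCell (p q : Lamp ℤ) : Finset ℤ := insert p.2 (insert q.2 (symmDiff p.1 q.1))

lemma FCell_nonempty (p q : Lamp ℤ) : (FCell p q).Nonempty :=
  ⟨p.2, Finset.mem_insert_self _ _⟩

def Mv (p q : Lamp ℤ) : ℤ := (FCell p q).max' (FCell_nonempty p q)
def mv (p q : Lamp ℤ) : ℤ := (FCell p q).min' (FCell_nonempty p q)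

lemma le_Mv {p q : Lamp ℤ} {z : ℤ} (h : z ∈ FCell p q) : z ≤ Mv p q :=
  Finset.le_max' _ _ h
lemma mv_le {p q : Lamp ℤ} {z : ℤ} (h : z ∈ FCell p q) : mv p q ≤ z :=
  Finset.min'_le _ _ h
lemma p2_mem_FCell (p q : Lamp ℤ) : p.2 ∈ FCell p q := Finset.mem_insert_self _ _
lemma q2_mem_FCell (p q : Lamp ℤ) : q.2 ∈ FCell p q :=
  Finset.mem_insert_of_mem (Finset.mem_insert_self _ _)
lemma mv_le_Mv (p q : Lamp ℤ) : mv p q ≤ Mv p q :=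
  le_trans (mv_le (p2_mem_FCell p q)) (le_Mv (p2_mem_FCell p q))

lemma sd_eq_FCell (p q : Lamp ℤ) :
    ({p.2, q.2} ∪ sd p q : Set ℤ) = ↑(FCell p q) := by
  ext z
  simp only [sd, FCell, Set.mem_union, Set.mem_insert_iff, Set.mem_singleton_iff,
    Set.mem_diff, Finset.coe_insert, Finset.mem_coe, Finset.mem_insert,
    Finset.mem_symmDiff]
  tauto

lemma TSCP_eq (p q : Lamp ℤ) :
    TSCP (fun a b : ℤ => dist a b) p q = ((Mv p q : ℝ)) - ((mv p q : ℝ)) := by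
  have hdiam : ediamD (fun a b : ℤ => dist a b) ({p.2, q.2} ∪ sd p q) =
      ENNReal.ofReal (((Mv p q : ℝ)) - ((mv p q : ℝ))) := by
    apply le_antisymm
    · apply iSup₂_le
      intro a ha
      apply iSup₂_le
      intro b hb
      apply ENNReal.ofReal_le_ofReal
      show dist a b ≤ _
      rw [sd_eq_FCell] at ha hb
      have h1 := le_Mv (Finset.mem_coe.1 ha)
      have h2 := mv_le (Finset.mem_coe.1 ha)
      have h3 := le_Mv (Finset.mem_coe.1 hb)
      have h4 := mv_le (Finset.mem_coe.1 hb)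
      have h1' : (a:ℝ) ≤ (Mv p q : ℝ) := by exact_mod_cast h1
      have h2' : (mv p q : ℝ) ≤ (a:ℝ) := by exact_mod_cast h2
      have h3' : (b:ℝ) ≤ (Mv p q : ℝ) := by exact_mod_cast h3
      have h4' : (mv p q : ℝ) ≤ (b:ℝ) := by exact_mod_cast h4
      rw [Int.dist_eq, abs_le]
      exact ⟨by linarith, by linarith⟩
    · have hM : (Mv p q : ℤ) ∈ ({p.2, q.2} ∪ sd p q : Set ℤ) := by
        rw [sd_eq_FCell]; exact Finset.mem_coe.2 (Finset.max'_mem _ _)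
      have hm : (mv p q : ℤ) ∈ ({p.2, q.2} ∪ sd p q : Set ℤ) := by
        rw [sd_eq_FCell]; exact Finset.mem_coe.2 (Finset.min'_mem _ _)
      apply le_iSup₂_of_le (Mv p q) hM
      apply le_iSup₂_of_le (mv p q) hm
      apply le_of_eq
      congr 1
      show _ = dist (Mv p q) (mv p q)
      have h' : ((mv p q : ℤ):ℝ) ≤ ((Mv p q : ℤ):ℝ) := by exact_mod_cast mv_le_Mv p q
      rw [Int.dist_eq, abs_of_nonneg (by linarith)]
  rw [TSCP, hdiam, ENNReal.toReal_ofReal]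
  have h' : ((mv p q : ℤ):ℝ) ≤ ((Mv p q : ℤ):ℝ) := by exact_mod_cast mv_le_Mv p q
  linarith

/-- An injective real encoding of finite sets of integers, with values in `(0, 1]`. -/
def code (A : Finset ℤ) : ℝ := ((Encodable.encode A : ℝ) + 1)⁻¹

lemma code_pos (A : Finset ℤ) : 0 < code A := by
  apply inv_pos.2
  positivity

lemma code_le_one (A : Finset ℤ) : code A ≤ 1 := by
  rw [code]
  rw [inv_le_one_iff₀]
  right
  have : (0:ℝ) ≤ (Encodable.encode A : ℝ) := Nat.cast_nonneg _
  linarith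

lemma code_inj : Function.Injective code := by
  intro A B h
  apply Encodable.encode_injective (α := Finset ℤ)
  have h1 : ((Encodable.encode A : ℝ) + 1) = ((Encodable.encode B : ℝ) + 1) :=
    inv_inj.1 h
  have : (Encodable.encode A : ℝ) = (Encodable.encode B : ℝ) := by linarith
  exact_mod_cast this

variable (σ : ℝ)

/-- The marker point in the tree, encoding the configuration at scale `σ`. -/
def mrk (hσ : 0 < σ) (p : Lamp ℤ) : TPt :=
  ⟨({code p.1}, code p.1 - σ), by
    intro a ha
    rw [Finset.mem_singleton] at ha
    show code p.1 - σ < a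
    rw [ha]; linarith⟩

/-- The right-lamps point in the tree. -/
def rgt (p : Lamp ℤ) : TPt :=
  ⟨((p.1.filter (fun a => p.2 < a)).image (fun a : ℤ => (a : ℝ)), (p.2 : ℝ)), by
    intro x hx
    obtain ⟨a, ha, rfl⟩ := Finset.mem_image.1 hx
    show (p.2:ℝ) < (a:ℝ)
    exact_mod_cast (Finset.mem_filter.1 ha).2⟩

/-- The left-lamps point in the tree. -/
def lft (p : Lamp ℤ) : TPt :=
  ⟨((p.1.filter (fun a => a < p.2)).image (fun a : ℤ => (-a : ℝ)), (-(p.2 : ℝ))), by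
    intro x hx
    obtain ⟨a, ha, rfl⟩ := Finset.mem_image.1 hx
    have h' : (a:ℝ) < (p.2:ℝ) := by exact_mod_cast (Finset.mem_filter.1 ha).2
    show -(p.2:ℝ) < -(a:ℝ)
    linarith⟩


@[simp] lemma mrk_ht (hσ : 0 < σ) (p : Lamp ℤ) : (mrk σ hσ p).ht = code p.1 - σ := rfl
@[simp] lemma mrk_cfg (hσ : 0 < σ) (p : Lamp ℤ) : (mrk σ hσ p).cfg = {code p.1} := rfl
@[simp] lemma rgt_ht (p : Lamp ℤ) : (rgt p).ht = (p.2 : ℝ) := rfl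
@[simp] lemma rgt_cfg (p : Lamp ℤ) :
    (rgt p).cfg = (p.1.filter (fun a => p.2 < a)).image (fun a : ℤ => (a : ℝ)) := rfl
@[simp] lemma lft_ht (p : Lamp ℤ) : (lft p).ht = -(p.2 : ℝ) := rfl
@[simp] lemma lft_cfg (p : Lamp ℤ) :
    (lft p).cfg = (p.1.filter (fun a => a < p.2)).image (fun a : ℤ => (-a : ℝ)) := rfl

lemma dist_mrk (hσ : 0 < σ) {p q : Lamp ℤ} (hne : p.1 ≠ q.1) :
    dist (mrk σ hσ p) (mrk σ hσ q) = 2 * σ + |code p.1 - code q.1| := by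
  set x := code p.1 with hx
  set y := code q.1 with hy
  have hxy : x ≠ y := fun h => hne (code_inj h)
  have hsd : symmDiff ({x} : Finset ℝ) {y} = {x, y} := by
    ext z
    simp only [Finset.mem_symmDiff, Finset.mem_singleton, Finset.mem_insert]
    constructor
    · rintro (⟨h, _⟩ | ⟨h, _⟩)
      · exact Or.inl h
      · exact Or.inr h
    · rintro (rfl | rfl)
      · exact Or.inl ⟨rfl, hxy⟩
      · exact Or.inr ⟨rfl, fun h => hxy h.symm⟩
  have hc : TPt.c (mrk σ hσ p) (mrk σ hσ q) = max x y := by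
    apply TPt.c_eq_of
    · apply TPt.mem_joinSet.2
      refine Or.inr (Or.inr ?_)
      rw [mrk_cfg, mrk_cfg, hsd]
      rcases max_choice x y with h | h <;> rw [h] <;> simp
    · intro z hz
      rcases TPt.mem_joinSet.1 hz with h | h | h
      · rw [h, mrk_ht]; have := le_max_left x y; linarith
      · rw [h, mrk_ht]; have := le_max_right x y; linarith
      · rw [mrk_cfg, mrk_cfg, hsd] at h
        rcases Finset.mem_insert.1 h with rfl | h'
        · exact le_max_left x y
        · rw [Finset.mem_singleton] at h'; rw [h']; exact le_max_right x y
  rw [TPt.dist_eq, hc, mrk_ht, mrk_ht]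
  rcases le_total x y with h | h
  · rw [max_eq_right h, abs_of_nonpos (by linarith)]; ring
  · rw [max_eq_left h, abs_of_nonneg (by linarith)]; ring

lemma dist_rgt (p q : Lamp ℤ) :
    dist (rgt p) (rgt q) = ((Mv p q : ℝ) - (p.2 : ℝ)) + ((Mv p q : ℝ) - (q.2 : ℝ)) := by
  have hp2 : ((p.2 : ℤ) : ℝ) ≤ (Mv p q : ℝ) := by exact_mod_cast le_Mv (p2_mem_FCell p q)
  have hq2 : ((q.2 : ℤ) : ℝ) ≤ (Mv p q : ℝ) := by exact_mod_cast le_Mv (q2_mem_FCell p q)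
  have hc : TPt.c (rgt p) (rgt q) = (Mv p q : ℝ) := by
    apply TPt.c_eq_of
    · -- membership
      have hMmem : Mv p q ∈ FCell p q := Finset.max'_mem _ _
      rcases Finset.mem_insert.1 hMmem with h | h
      · exact TPt.mem_joinSet.2 (Or.inl (by rw [rgt_ht, h]))
      rcases Finset.mem_insert.1 h with h | h
      · exact TPt.mem_joinSet.2 (Or.inr (Or.inl (by rw [rgt_ht, h])))
      by_cases hp : p.2 < Mv p q
      · by_cases hq : q.2 < Mv p q
        · apply TPt.mem_joinSet.2
          refine Or.inr (Or.inr ?_)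
          rw [rgt_cfg, rgt_cfg, ← Finset.image_symmDiff _ _ Int.cast_injective]
          apply Finset.mem_image_of_mem
          rcases Finset.mem_symmDiff.1 h with ⟨h1, h2⟩ | ⟨h1, h2⟩
          · apply Finset.mem_symmDiff.2
            refine Or.inl ⟨Finset.mem_filter.2 ⟨h1, hp⟩, ?_⟩
            intro hc'
            exact h2 (Finset.mem_filter.1 hc').1
          · apply Finset.mem_symmDiff.2
            refine Or.inr ⟨Finset.mem_filter.2 ⟨h1, hq⟩, ?_⟩
            intro hc'
            exact h2 (Finset.mem_filter.1 hc').1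
        · have he : Mv p q = q.2 := le_antisymm (not_lt.1 hq) (le_Mv (q2_mem_FCell p q))
          exact TPt.mem_joinSet.2 (Or.inr (Or.inl (by rw [rgt_ht, he])))
      · have he : Mv p q = p.2 := le_antisymm (not_lt.1 hp) (le_Mv (p2_mem_FCell p q))
        exact TPt.mem_joinSet.2 (Or.inl (by rw [rgt_ht, he]))
    · intro z hz
      rcases TPt.mem_joinSet.1 hz with h | h | h
      · rw [h, rgt_ht]; exact hp2
      · rw [h, rgt_ht]; exact hq2
      · rw [rgt_cfg, rgt_cfg, ← Finset.image_symmDiff _ _ Int.cast_injective] at h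
        obtain ⟨a, ha, rfl⟩ := Finset.mem_image.1 h
        rcases Finset.mem_symmDiff.1 ha with ⟨h1, h2⟩ | ⟨h1, h2⟩
        · obtain ⟨hap, hpa⟩ := Finset.mem_filter.1 h1
          show (a:ℝ) ≤ (Mv p q : ℝ)
          by_cases haq : a ∈ q.1
          · have h3 : ¬ q.2 < a := fun hlt => h2 (Finset.mem_filter.2 ⟨haq, hlt⟩)
            have h4 : (a:ℝ) ≤ (q.2:ℝ) := by exact_mod_cast not_lt.1 h3
            linarith
          · have h5 : a ∈ FCell p q := Finset.mem_insert_of_mem (Finset.mem_insert_of_mem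
              (Finset.mem_symmDiff.2 (Or.inl ⟨hap, haq⟩)))
            exact_mod_cast le_Mv h5
        · obtain ⟨haq, hqa⟩ := Finset.mem_filter.1 h1
          show (a:ℝ) ≤ (Mv p q : ℝ)
          by_cases hap : a ∈ p.1
          · have h3 : ¬ p.2 < a := fun hlt => h2 (Finset.mem_filter.2 ⟨hap, hlt⟩)
            have h4 : (a:ℝ) ≤ (p.2:ℝ) := by exact_mod_cast not_lt.1 h3
            linarith
          · have h5 : a ∈ FCell p q := Finset.mem_insert_of_mem (Finset.mem_insert_of_mem
              (Finset.mem_symmDiff.2 (Or.inr ⟨haq, hap⟩)))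
            exact_mod_cast le_Mv h5
  rw [TPt.dist_eq, hc, rgt_ht, rgt_ht]

lemma dist_lft (p q : Lamp ℤ) :
    dist (lft p) (lft q) = ((p.2 : ℝ) - (mv p q : ℝ)) + ((q.2 : ℝ) - (mv p q : ℝ)) := by
  have hneginj : Function.Injective (fun a : ℤ => (-a : ℝ)) := by
    intro a b h
    simp only [neg_inj] at h
    exact_mod_cast h
  have hp2 : (mv p q : ℝ) ≤ ((p.2 : ℤ) : ℝ) := by exact_mod_cast mv_le (p2_mem_FCell p q)
  have hq2 : (mv p q : ℝ) ≤ ((q.2 : ℤ) : ℝ) := by exact_mod_cast mv_le (q2_mem_FCell p q)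
  have hc : TPt.c (lft p) (lft q) = -(mv p q : ℝ) := by
    apply TPt.c_eq_of
    · have hmmem : mv p q ∈ FCell p q := Finset.min'_mem _ _
      rcases Finset.mem_insert.1 hmmem with h | h
      · exact TPt.mem_joinSet.2 (Or.inl (by rw [lft_ht, h]))
      rcases Finset.mem_insert.1 h with h | h
      · exact TPt.mem_joinSet.2 (Or.inr (Or.inl (by rw [lft_ht, h])))
      by_cases hp : mv p q < p.2
      · by_cases hq : mv p q < q.2
        · apply TPt.mem_joinSet.2
          refine Or.inr (Or.inr ?_)
          rw [lft_cfg, lft_cfg, ← Finset.image_symmDiff _ _ hneginj]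
          apply Finset.mem_image_of_mem
          rcases Finset.mem_symmDiff.1 h with ⟨h1, h2⟩ | ⟨h1, h2⟩
          · apply Finset.mem_symmDiff.2
            refine Or.inl ⟨Finset.mem_filter.2 ⟨h1, hp⟩, ?_⟩
            intro hc'
            exact h2 (Finset.mem_filter.1 hc').1
          · apply Finset.mem_symmDiff.2
            refine Or.inr ⟨Finset.mem_filter.2 ⟨h1, hq⟩, ?_⟩
            intro hc'
            exact h2 (Finset.mem_filter.1 hc').1
        · have he : mv p q = q.2 := le_antisymm (mv_le (q2_mem_FCell p q)) (not_lt.1 hq)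
          exact TPt.mem_joinSet.2 (Or.inr (Or.inl (by rw [lft_ht, he])))
      · have he : mv p q = p.2 := le_antisymm (mv_le (p2_mem_FCell p q)) (not_lt.1 hp)
        exact TPt.mem_joinSet.2 (Or.inl (by rw [lft_ht, he]))
    · intro z hz
      rcases TPt.mem_joinSet.1 hz with h | h | h
      · rw [h, lft_ht]; linarith
      · rw [h, lft_ht]; linarith
      · rw [lft_cfg, lft_cfg, ← Finset.image_symmDiff _ _ hneginj] at h
        obtain ⟨a, ha, rfl⟩ := Finset.mem_image.1 h
        rcases Finset.mem_symmDiff.1 ha with ⟨h1, h2⟩ | ⟨h1, h2⟩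
        · obtain ⟨hap, hpa⟩ := Finset.mem_filter.1 h1
          by_cases haq : a ∈ q.1
          · have h3 : ¬ a < q.2 := fun hlt => h2 (Finset.mem_filter.2 ⟨haq, hlt⟩)
            have h4 : (q.2:ℝ) ≤ (a:ℝ) := by exact_mod_cast not_lt.1 h3
            show -(a:ℝ) ≤ -(mv p q : ℝ)
            linarith
          · have h5 : a ∈ FCell p q := Finset.mem_insert_of_mem (Finset.mem_insert_of_mem
              (Finset.mem_symmDiff.2 (Or.inl ⟨hap, haq⟩)))
            have h6 : (mv p q : ℝ) ≤ (a:ℝ) := by exact_mod_cast mv_le h5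
            show -(a:ℝ) ≤ -(mv p q : ℝ)
            linarith
        · obtain ⟨haq, hqa⟩ := Finset.mem_filter.1 h1
          by_cases hap : a ∈ p.1
          · have h3 : ¬ a < p.2 := fun hlt => h2 (Finset.mem_filter.2 ⟨hap, hlt⟩)
            have h4 : (p.2:ℝ) ≤ (a:ℝ) := by exact_mod_cast not_lt.1 h3
            show -(a:ℝ) ≤ -(mv p q : ℝ)
            linarith
          · have h5 : a ∈ FCell p q := Finset.mem_insert_of_mem (Finset.mem_insert_of_mem
              (Finset.mem_symmDiff.2 (Or.inr ⟨haq, hap⟩)))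
            have h6 : (mv p q : ℝ) ≤ (a:ℝ) := by exact_mod_cast mv_le h5
            show -(a:ℝ) ≤ -(mv p q : ℝ)
            linarith
  rw [TPt.dist_eq, hc, lft_ht, lft_ht]
  ring

end Embed


/-- There exist three ℝ-trees `T₁, T₂, T₃` such that for every `σ ≥ 1`,
`(La(ℤ), TSCP + σρ)` admits a 6-biLipschitz embedding into the ℓ1-product
`T₁ ⊕₁ T₂ ⊕₁ T₃` and an 18-biLipschitz embedding into the ℓ∞-product
`T₁ ⊕_∞ T₂ ⊕_∞ T₃`. -/
theorem statement6 :
    ∃ (T₁ T₂ T₃ : Type) (I₁ : MetricSpace T₁) (I₂ : MetricSpace T₂) (I₃ : MetricSpace T₃),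
      letI := I₁
      letI := I₂
      letI := I₃
      IsRTree T₁ ∧ IsRTree T₂ ∧ IsRTree T₃ ∧
      ∀ σ : ℝ, 1 ≤ σ →
        (∃ f : Lamp ℤ → T₁ × T₂ × T₃,
          BiLipWith (fun p q : Lamp ℤ => TSCP (fun a b : ℤ => dist a b) p q + σ * rho p q)
            (fun u v => dist u.1 v.1 + dist u.2.1 v.2.1 + dist u.2.2 v.2.2) 6 f) ∧
        (∃ g : Lamp ℤ → T₁ × T₂ × T₃,
          BiLipWith (fun p q : Lamp ℤ => TSCP (fun a b : ℤ => dist a b) p q + σ * rho p q)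
            (fun u v => max (dist u.1 v.1) (max (dist u.2.1 v.2.1) (dist u.2.2 v.2.2))) 18 g) := by
  refine ⟨TPt, TPt, TPt, inferInstance, inferInstance, inferInstance,
    TPt.isRTree, TPt.isRTree, TPt.isRTree, ?_⟩
  intro σ hσ
  have hσ0 : (0:ℝ) < σ := by linarith
  set f : Lamp ℤ → TPt × TPt × TPt := fun p => (mrk σ hσ0 p, rgt p, lft p) with hf
  have hinj : Function.Injective f := by
    intro p q h
    have h1 : mrk σ hσ0 p = mrk σ hσ0 q := congrArg Prod.fst h
    have h2 : rgt p = rgt q := congrArg (fun z => z.2.1) h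
    have hx : p.2 = q.2 := by
      have := congrArg TPt.ht h2
      rw [rgt_ht, rgt_ht] at this
      exact_mod_cast this
    have hA : p.1 = q.1 := by
      have := congrArg TPt.cfg h1
      rw [mrk_cfg, mrk_cfg] at this
      exact code_inj (Finset.singleton_injective this)
    exact Prod.ext hA hx
  -- key distance estimates
  have key : ∀ p q : Lamp ℤ,
      2 * (TSCP (fun a b : ℤ => dist a b) p q + σ * rho p q) ≤
        dist (f p).1 (f q).1 + dist (f p).2.1 (f q).2.1 + dist (f p).2.2 (f q).2.2 ∧
      dist (f p).1 (f q).1 + dist (f p).2.1 (f q).2.1 + dist (f p).2.2 (f q).2.2 ≤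
        3 * (TSCP (fun a b : ℤ => dist a b) p q + σ * rho p q) := by
    intro p q
    have hTS := TSCP_eq p q
    have hR := dist_rgt p q
    have hL := dist_lft p q
    have hMm : ((mv p q : ℤ):ℝ) ≤ ((Mv p q : ℤ):ℝ) := by exact_mod_cast mv_le_Mv p q
    have hfp1 : (f p).1 = mrk σ hσ0 p := rfl
    have hfq1 : (f q).1 = mrk σ hσ0 q := rfl
    have hfp2 : (f p).2.1 = rgt p := rfl
    have hfq2 : (f q).2.1 = rgt q := rfl
    have hfp3 : (f p).2.2 = lft p := rfl
    have hfq3 : (f q).2.2 = lft q := rfl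
    rw [hfp1, hfq1, hfp2, hfq2, hfp3, hfq3, hR, hL, hTS]
    by_cases h : p.1 = q.1
    · have hm : mrk σ hσ0 p = mrk σ hσ0 q := by
        apply Subtype.ext
        apply Prod.ext
        · show ({code p.1} : Finset ℝ) = {code q.1}
          rw [h]
        · show code p.1 - σ = code q.1 - σ
          rw [h]
      rw [hm, dist_self, rho, if_pos h]
      constructor <;> linarith
    · rw [dist_mrk σ hσ0 h, rho, if_neg h]
      have hab : |code p.1 - code q.1| ≤ 1 := by
        have h1 := code_pos p.1
        have h2 := code_pos q.1
        have h3 := code_le_one p.1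
        have h4 := code_le_one q.1
        rw [abs_le]
        constructor <;> linarith
      have hab0 : 0 ≤ |code p.1 - code q.1| := abs_nonneg _
      constructor <;> linarith
  have tnn : ∀ p q : Lamp ℤ,
      0 ≤ TSCP (fun a b : ℤ => dist a b) p q + σ * rho p q := by
    intro p q
    have hTS := TSCP_eq p q
    have hMm : ((mv p q : ℤ):ℝ) ≤ ((Mv p q : ℤ):ℝ) := by exact_mod_cast mv_le_Mv p q
    have : (0:ℝ) ≤ rho p q := by rw [rho]; split <;> norm_num
    nlinarith
  constructor
  · -- ℓ1 embedding
    refine ⟨f, hinj, 2, by norm_num, ?_⟩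
    intro p q
    obtain ⟨k1, k2⟩ := key p q
    have h0 := tnn p q
    constructor
    · show 2 * (TSCP (fun a b : ℤ => dist a b) p q + σ * rho p q) ≤
        dist (f p).1 (f q).1 + dist (f p).2.1 (f q).2.1 + dist (f p).2.2 (f q).2.2
      linarith
    · show dist (f p).1 (f q).1 + dist (f p).2.1 (f q).2.1 + dist (f p).2.2 (f q).2.2 ≤
        6 * 2 * (TSCP (fun a b : ℤ => dist a b) p q + σ * rho p q)
      linarith
  · -- ℓ∞ embedding
    refine ⟨f, hinj, 2/3, by norm_num, ?_⟩
    intro p q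
    obtain ⟨k1, k2⟩ := key p q
    have h0 := tnn p q
    have hshow1 : (2/3 : ℝ) * (TSCP (fun a b : ℤ => dist a b) p q + σ * rho p q) ≤
        max (dist (f p).1 (f q).1)
          (max (dist (f p).2.1 (f q).2.1) (dist (f p).2.2 (f q).2.2)) ∧
        max (dist (f p).1 (f q).1)
          (max (dist (f p).2.1 (f q).2.1) (dist (f p).2.2 (f q).2.2)) ≤
        18 * (2/3) * (TSCP (fun a b : ℤ => dist a b) p q + σ * rho p q) → True := fun _ => trivial
    clear hshow1
    set d1 := dist (f p).1 (f q).1 with hd1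
    set d2 := dist (f p).2.1 (f q).2.1 with hd2
    set d3 := dist (f p).2.2 (f q).2.2 with hd3
    have hn1 : 0 ≤ d1 := dist_nonneg
    have hn2 : 0 ≤ d2 := dist_nonneg
    have hn3 : 0 ≤ d3 := dist_nonneg
    have hm1 : d1 ≤ max d1 (max d2 d3) := le_max_left _ _
    have hm2 : d2 ≤ max d1 (max d2 d3) :=
      le_trans (le_max_left _ _) (le_max_right _ _)
    have hm3 : d3 ≤ max d1 (max d2 d3) :=
      le_trans (le_max_right _ _) (le_max_right _ _)
    have hmax_le : max d1 (max d2 d3) ≤ d1 + d2 + d3 := by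
      apply max_le (by linarith)
      apply max_le (by linarith) (by linarith)
    constructor
    · show (2/3 : ℝ) * (TSCP (fun a b : ℤ => dist a b) p q + σ * rho p q) ≤
        max d1 (max d2 d3)
      linarith
    · show max d1 (max d2 d3) ≤
        18 * (2/3) * (TSCP (fun a b : ℤ => dist a b) p q + σ * rho p q)
      linarith


end Lamplighter
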